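/- Let (u,v) be a C² radial solution of the system -(ru')' = r e^v(e^u+1), -(rv')' = r e^u(e^v-1) for r > 0, with u(r) - 2N₁ ln r = O(1) and v(r) - 2N₂ ln r = O(1) as r → 0⁺, where N₁, N₂ ∈ ℕ. Then for all r > 0: ru'(r) = 2N₁ - ∫₀^r t e^{v(t)}(e^{u(t)}+1) dt and rv'(r) = 2N₂ - ∫₀^r t e^{u(t)}(e^{v(t)}-1) dt. -/

import Mathlib

open MeasureTheory Real intervalIntegral Set Filter

/-- If `w' ≥ (μ+c)/t` near 0 with `c > 0`, then `w - μ log` cannot stay bounded near 0. -/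
lemma escape_aux (w w' : ℝ → ℝ) (μ c C a : ℝ) (hc : 0 < c) (ha : 0 < a)
    (hcont : ContinuousOn w' (Set.Ioi 0))
    (hder : ∀ t ∈ Set.Ioo (0:ℝ) a, HasDerivAt w (w' t) t)
    (hlow : ∀ t ∈ Set.Ioo (0:ℝ) a, (μ + c) / t ≤ w' t)
    (hbd : ∀ t ∈ Set.Ioo (0:ℝ) a, |w t - μ * Real.log t| ≤ C) : False := by
  set C₁ := max C 0 with hC₁def
  have hC₁ : 0 ≤ C₁ := le_max_right _ _
  set x := (2 * C₁ + 1) / c with hxdef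
  have hx : 0 < x := by positivity
  set b := a / 2 with hbdef
  have hb : 0 < b := by positivity
  have hba : b < a := by simp [hbdef]; linarith
  set s := b * Real.exp (-x) with hsdef
  have hs0 : 0 < s := mul_pos hb (Real.exp_pos _)
  have hsb : s < b := by
    have : Real.exp (-x) < 1 := Real.exp_lt_one_iff.mpr (by linarith)
    calc s = b * Real.exp (-x) := rfl
    _ < b * 1 := by nlinarith
    _ = b := by ring
  have hsub : Set.Icc s b ⊆ Set.Ioo 0 a := fun t ht =>
    ⟨lt_of_lt_of_le hs0 ht.1, lt_of_le_of_lt ht.2 hba⟩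
  have hsubIoi : Set.Icc s b ⊆ Set.Ioi (0:ℝ) := fun t ht => lt_of_lt_of_le hs0 ht.1
  have h0not : (0:ℝ) ∉ Set.uIcc s b := by
    rw [Set.uIcc_of_le hsb.le]
    intro h; exact absurd h.1 (not_le.mpr hs0)
  have hint_w' : IntervalIntegrable w' volume s b := by
    apply ContinuousOn.intervalIntegrable
    rw [Set.uIcc_of_le hsb.le]
    exact hcont.mono hsubIoi
  have hint_one : IntervalIntegrable (fun t => (μ + c) * (1/t)) volume s b := by
    apply ContinuousOn.intervalIntegrable
    rw [Set.uIcc_of_le hsb.le]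
    exact (continuousOn_const.mul ((continuousOn_const.div continuousOn_id
      (fun t ht => (hsubIoi ht).ne'))))
  have hFTC : ∫ t in s..b, w' t = w b - w s := by
    apply intervalIntegral.integral_eq_sub_of_hasDerivAt
    · intro t ht
      rw [Set.uIcc_of_le hsb.le] at ht
      exact hder t (hsub ht)
    · exact hint_w'
  have hone : ∫ t in s..b, (μ + c) * (1/t) = (μ + c) * (Real.log b - Real.log s) := by
    rw [intervalIntegral.integral_const_mul, integral_one_div h0not,
      Real.log_div hb.ne' hs0.ne']
  have hmono : ∫ t in s..b, (μ + c) * (1/t) ≤ ∫ t in s..b, w' t := by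
    apply intervalIntegral.integral_mono_on hsb.le hint_one hint_w'
    intro t ht
    rw [mul_one_div]
    exact hlow t (hsub ht)
  have hlogs : Real.log s = Real.log b - x := by
    rw [hsdef, Real.log_mul hb.ne' (Real.exp_ne_zero _), Real.log_exp]; ring
  have hgb : |w b - μ * Real.log b| ≤ C := hbd b ⟨hb, hba⟩
  have hgs : |w s - μ * Real.log s| ≤ C := hbd s ⟨hs0, lt_trans hsb hba⟩
  have hcx : c * x = 2 * C₁ + 1 := mul_div_cancel₀ _ hc.ne'
  have h1 : (μ + c) * x ≤ w b - w s := by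
    rw [hFTC, hone, hlogs] at hmono
    linarith [hmono]
  have hCC : C ≤ C₁ := le_max_left _ _
  have h2 := abs_le.mp hgb
  have h3 := abs_le.mp hgs
  rw [hlogs] at h3
  nlinarith [h2.1, h2.2, h3.1, h3.2]

lemma key_aux (N : ℕ) (w f : ℝ → ℝ)
    (hw : ContDiffOn ℝ 2 w (Set.Ioi 0))
    (hfc : ContinuousOn f (Set.Ioi 0))
    (hODE : ∀ r > (0:ℝ), deriv (fun s => s * deriv w s) r = -f r)
    (hbd : ∃ M δ, 0 < δ ∧ ∀ t ∈ Set.Ioo (0:ℝ) δ, |f t| ≤ M)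
    (hw0 : ∃ C ε, 0 < ε ∧ ∀ r ∈ Set.Ioo (0:ℝ) ε, |w r - 2 * N * Real.log r| ≤ C) :
    ∀ r > (0:ℝ), r * deriv w r = 2 * N - ∫ t in (0:ℝ)..r, f t := by
  obtain ⟨M, δ, hδ, hM⟩ := hbd
  obtain ⟨C, ε, hε, hC⟩ := hw0
  have hM0 : 0 ≤ max M 0 := le_max_right _ _
  have hMM : M ≤ max M 0 := le_max_left _ _
  set M₀ := max M 0 with hM₀def
  -- regularity
  have hw1 : ContDiffOn ℝ 1 (deriv w) (Set.Ioi 0) :=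
    hw.deriv_of_isOpen isOpen_Ioi (by norm_num)
  have hdw : DifferentiableOn ℝ (deriv w) (Set.Ioi 0) := hw1.differentiableOn one_ne_zero
  have hcw : ContinuousOn (deriv w) (Set.Ioi 0) := hw1.continuousOn
  have hwd : DifferentiableOn ℝ w (Set.Ioi 0) := hw.differentiableOn two_ne_zero
  have hwder : ∀ t ∈ Set.Ioi (0:ℝ), HasDerivAt w (deriv w t) t := by
    intro t ht
    exact (hwd.differentiableAt (Ioi_mem_nhds ht)).hasDerivAt
  have hFder : ∀ t ∈ Set.Ioi (0:ℝ), HasDerivAt (fun s => s * deriv w s) (-f t) t := by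
    intro t ht
    have h1 : DifferentiableAt ℝ (deriv w) t := hdw.differentiableAt (Ioi_mem_nhds ht)
    have h2 : DifferentiableAt ℝ (fun s => s * deriv w s) t := differentiableAt_id.mul h1
    have h3 := h2.hasDerivAt
    rwa [hODE t ht] at h3
  -- FTC on [s, r] for 0 < s ≤ r
  have hFs : ∀ r > (0:ℝ), ∀ s ∈ Set.Ioc (0:ℝ) r,
      s * deriv w s = r * deriv w r + ∫ t in s..r, f t := by
    intro r hr s hs
    have hsubIoi : Set.Icc s r ⊆ Set.Ioi (0:ℝ) := fun t ht => lt_of_lt_of_le hs.1 ht.1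
    have hint : IntervalIntegrable (fun t => -f t) volume s r := by
      apply ContinuousOn.intervalIntegrable
      rw [Set.uIcc_of_le hs.2]
      exact (hfc.mono hsubIoi).neg
    have hFTC : ∫ t in s..r, -f t = r * deriv w r - s * deriv w s := by
      apply intervalIntegral.integral_eq_sub_of_hasDerivAt
      · intro t ht
        rw [Set.uIcc_of_le hs.2] at ht
        exact hFder t (hsubIoi ht)
      · exact hint
    rw [intervalIntegral.integral_neg] at hFTC
    linarith [hFTC]
  intro r hr
  -- integrability on (0, r]
  set c' := min (δ/2) r with hc'def
  have hc' : 0 < c' := lt_min (by linarith) hr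
  have hc'r : c' ≤ r := min_le_right _ _
  have hc'δ : c' < δ := lt_of_le_of_lt (min_le_left _ _) (by linarith)
  have hIoc : IntegrableOn f (Set.Ioc 0 c') := by
    have hmeas : AEStronglyMeasurable f (volume.restrict (Set.Ioc 0 c')) :=
      (hfc.mono (fun t ht => ht.1)).aestronglyMeasurable measurableSet_Ioc
    apply Integrable.mono' (integrable_const M₀) hmeas
    rw [ae_restrict_iff' measurableSet_Ioc]
    filter_upwards with t ht
    have : t ∈ Set.Ioo (0:ℝ) δ := ⟨ht.1, lt_of_le_of_lt ht.2 hc'δ⟩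
    calc ‖f t‖ = |f t| := rfl
    _ ≤ M := hM t this
    _ ≤ M₀ := hMM
  have hIcc : IntegrableOn f (Set.Icc c' r) := by
    apply ContinuousOn.integrableOn_compact isCompact_Icc
    exact hfc.mono (fun t ht => lt_of_lt_of_le hc' ht.1)
  have hInt : IntervalIntegrable f volume 0 r := by
    rw [intervalIntegrable_iff_integrableOn_Ioc_of_le hr.le]
    apply (hIoc.union hIcc).mono_set
    intro t ht
    rcases le_or_gt t c' with h | h
    · exact Or.inl ⟨ht.1, h⟩
    · exact Or.inr ⟨h.le, ht.2⟩
  have hIs : ∀ s ∈ Set.Ioc (0:ℝ) r, IntervalIntegrable f volume 0 s := by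
    intro s hs
    apply hInt.mono_set
    rw [Set.uIcc_of_le hs.1.le, Set.uIcc_of_le hr.le]
    exact Set.Icc_subset_Icc le_rfl hs.2
  -- tail integral tends to 0
  have hT0 : Tendsto (fun s => ∫ t in (0:ℝ)..s, f t) (nhdsWithin 0 (Set.Ioi 0)) (nhds 0) := by
    apply squeeze_zero_norm' (a := fun s => M₀ * s)
    · filter_upwards [Ioo_mem_nhdsGT_of_mem (Set.mem_Ico.mpr ⟨le_rfl, hc'⟩)] with s hs
      have hb : ∀ t ∈ Set.uIoc (0:ℝ) s, ‖f t‖ ≤ M₀ := by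
        intro t ht
        rw [Set.uIoc_of_le hs.1.le] at ht
        have ht' : t ∈ Set.Ioo (0:ℝ) δ := ⟨ht.1, lt_of_le_of_lt ht.2 (lt_of_lt_of_le hs.2 hc'δ.le)⟩
        exact le_trans (hM t ht') hMM
      have := intervalIntegral.norm_integral_le_of_norm_le_const hb
      rwa [sub_zero, abs_of_pos hs.1] at this
    · have h1 : Tendsto (fun s : ℝ => M₀ * s) (nhds 0) (nhds (M₀ * 0)) :=
        (continuous_const.mul continuous_id).tendsto 0
      rw [mul_zero] at h1
      exact h1.mono_left nhdsWithin_le_nhds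
  -- limit of s * w'(s) as s → 0⁺
  have hL : Tendsto (fun s => s * deriv w s) (nhdsWithin 0 (Set.Ioi 0))
      (nhds (r * deriv w r + ∫ t in (0:ℝ)..r, f t)) := by
    have heq : ∀ᶠ s in nhdsWithin 0 (Set.Ioi 0),
        (r * deriv w r + ∫ t in (0:ℝ)..r, f t) - ∫ t in (0:ℝ)..s, f t = s * deriv w s := by
      filter_upwards [Ioo_mem_nhdsGT_of_mem (Set.mem_Ico.mpr ⟨le_rfl, hr⟩)] with s hs
      have hs' : s ∈ Set.Ioc (0:ℝ) r := ⟨hs.1, hs.2.le⟩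
      have h2 := intervalIntegral.integral_interval_sub_left hInt (hIs s hs')
      rw [hFs r hr s hs']
      linarith [h2]
    have h3 : Tendsto (fun s => (r * deriv w r + ∫ t in (0:ℝ)..r, f t) - ∫ t in (0:ℝ)..s, f t)
        (nhdsWithin 0 (Set.Ioi 0)) (nhds (r * deriv w r + ∫ t in (0:ℝ)..r, f t)) := by
      have := tendsto_const_nhds (x := r * deriv w r + ∫ t in (0:ℝ)..r, f t)
        (f := nhdsWithin (0:ℝ) (Set.Ioi 0)) |>.sub hT0
      simpa using this
    exact Tendsto.congr' (by filter_upwards [heq] with s h using h) h3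
  set L := r * deriv w r + ∫ t in (0:ℝ)..r, f t with hLdef
  -- show L = 2N
  have hL2N : L = 2 * N := by
    by_contra hne
    have hc0 : 0 < |L - 2 * N| := abs_pos.mpr (sub_ne_zero.mpr hne)
    -- find δ₁ where |F t - L| < |L - 2N|/2
    have hball : ∀ᶠ t in nhdsWithin 0 (Set.Ioi 0), |t * deriv w t - L| < |L - 2 * N| / 2 := by
      have := hL (Metric.ball_mem_nhds L (half_pos hc0))
      filter_upwards [this] with t ht
      simp only [Set.mem_preimage, Metric.mem_ball, Real.dist_eq] at ht
      exact ht
    rw [eventually_nhdsWithin_iff, Metric.eventually_nhds_iff] at hball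
    obtain ⟨δ₁, hδ₁, hball⟩ := hball
    have hkey : ∀ t ∈ Set.Ioo (0:ℝ) (min δ₁ ε), |t * deriv w t - L| < |L - 2 * N| / 2 := by
      intro t ht
      apply hball _ ht.1
      rw [Real.dist_eq, sub_zero, abs_of_pos ht.1]
      exact lt_of_lt_of_le ht.2 (min_le_left _ _)
    have hminpos : 0 < min δ₁ ε := lt_min hδ₁ hε
    have hbd' : ∀ t ∈ Set.Ioo (0:ℝ) (min δ₁ ε), |w t - 2 * N * Real.log t| ≤ C := by
      intro t ht
      exact hC t ⟨ht.1, lt_of_lt_of_le ht.2 (min_le_right _ _)⟩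
    rcases lt_or_gt_of_ne hne with hlt | hgt
    · -- L < 2N : use escape on -w
      set c0 := 2 * N - L with hc0def
      have hc0' : 0 < c0 := by simp [hc0def]; linarith
      have habs : |L - 2 * N| = c0 := by rw [abs_of_neg (by linarith)]; ring
      apply escape_aux (fun t => -w t) (fun t => -(deriv w t)) (-(2 * N)) (c0 / 2) C
        (min δ₁ ε) (by linarith) hminpos hcw.neg
      · intro t ht
        exact (hwder t ht.1).neg
      · intro t ht
        have h4 := hkey t ht
        rw [habs] at h4
        have h5 : t * deriv w t < L + c0 / 2 := by
          have := (abs_lt.mp h4).2; linarith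
        have h6 : t * deriv w t ≤ 2 * N - c0 / 2 := by linarith
        have h7 : (-(2 * N) + c0 / 2) / t ≤ -(deriv w t) ↔
            -(2 * N) + c0 / 2 ≤ -(deriv w t) * t := div_le_iff₀ ht.1
        rw [h7]
        nlinarith
      · intro t ht
        have := hbd' t ht
        rw [show (fun t => -w t) t - -(2 * N : ℝ) * Real.log t = -(w t - 2 * N * Real.log t) by ring,
          abs_neg]
        exact this
    · -- L > 2N : use escape on w
      set c0 := L - 2 * N with hc0def
      have hc0' : 0 < c0 := by simp [hc0def]; linarith
      have habs : |L - 2 * N| = c0 := abs_of_pos hc0'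
      apply escape_aux w (deriv w) (2 * N) (c0 / 2) C (min δ₁ ε) (by linarith) hminpos hcw
      · intro t ht
        exact hwder t ht.1
      · intro t ht
        have h4 := hkey t ht
        rw [habs] at h4
        have h5 : L - c0 / 2 < t * deriv w t := by
          have := (abs_lt.mp h4).1; linarith
        rw [div_le_iff₀ ht.1]
        nlinarith
      · exact hbd'
  have : r * deriv w r = L - ∫ t in (0:ℝ)..r, f t := by rw [hLdef]; ring
  rw [this, hL2N]

lemma exp_bound_aux (N : ℕ) (w : ℝ → ℝ) (C ε : ℝ)
    (h : ∀ r ∈ Set.Ioo (0:ℝ) ε, |w r - 2 * N * Real.log r| ≤ C) :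
    ∀ r ∈ Set.Ioo (0:ℝ) (min ε 1), Real.exp (w r) ≤ Real.exp C := by
  intro r hr
  have h1 : r ∈ Set.Ioo (0:ℝ) ε := ⟨hr.1, lt_of_lt_of_le hr.2 (min_le_left _ _)⟩
  have h2 : Real.log r ≤ 0 := Real.log_nonpos hr.1.le
    (le_of_lt (lt_of_lt_of_le hr.2 (min_le_right _ _)))
  have h3 := (abs_le.mp (h r h1)).2
  have h4 : w r ≤ C := by nlinarith [h2, Nat.cast_nonneg (α := ℝ) N]
  exact Real.exp_le_exp.mpr h4

theorem stmt4 (N₁ N₂ : ℕ) (u v : ℝ → ℝ)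
    (hu : ContDiffOn ℝ 2 u (Set.Ioi 0)) (hv : ContDiffOn ℝ 2 v (Set.Ioi 0))
    (hODEu : ∀ r > (0 : ℝ),
      deriv (fun s => s * deriv u s) r = -(r * Real.exp (v r) * (Real.exp (u r) + 1)))
    (hODEv : ∀ r > (0 : ℝ),
      deriv (fun s => s * deriv v s) r = -(r * Real.exp (u r) * (Real.exp (v r) - 1)))
    (hu0 : ∃ C ε, 0 < ε ∧ ∀ r ∈ Set.Ioo (0 : ℝ) ε, |u r - 2 * N₁ * Real.log r| ≤ C)
    (hv0 : ∃ C ε, 0 < ε ∧ ∀ r ∈ Set.Ioo (0 : ℝ) ε, |v r - 2 * N₂ * Real.log r| ≤ C) :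
    ∀ r > (0 : ℝ),
      (r * deriv u r = 2 * N₁ - ∫ t in (0 : ℝ)..r, t * Real.exp (v t) * (Real.exp (u t) + 1)) ∧
      (r * deriv v r = 2 * N₂ - ∫ t in (0 : ℝ)..r, t * Real.exp (u t) * (Real.exp (v t) - 1)) := by
  obtain ⟨Cu, εu, hεu, hCu⟩ := hu0
  obtain ⟨Cv, εv, hεv, hCv⟩ := hv0
  have hcu : ContinuousOn u (Set.Ioi 0) := hu.continuousOn
  have hcv : ContinuousOn v (Set.Ioi 0) := hv.continuousOn
  have hceu : ContinuousOn (fun t => Real.exp (u t)) (Set.Ioi 0) :=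
    Real.continuous_exp.comp_continuousOn hcu
  have hcev : ContinuousOn (fun t => Real.exp (v t)) (Set.Ioi 0) :=
    Real.continuous_exp.comp_continuousOn hcv
  have hbu := exp_bound_aux N₁ u Cu εu hCu
  have hbv := exp_bound_aux N₂ v Cv εv hCv
  set δ := min (min εu 1) (min εv 1) with hδdef
  have hδ : 0 < δ := lt_min (lt_min hεu one_pos) (lt_min hεv one_pos)
  have hδ1 : δ ≤ 1 := le_trans (min_le_left _ _) (min_le_right _ _)
  intro r hr
  constructor
  · apply key_aux N₁ u (fun t => t * Real.exp (v t) * (Real.exp (u t) + 1)) hu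
      ((continuousOn_id.mul hcev).mul (hceu.add continuousOn_const)) hODEu
      _ ⟨Cu, εu, hεu, hCu⟩ r hr
    refine ⟨Real.exp Cv * (Real.exp Cu + 1), δ, hδ, fun t ht => ?_⟩
    have ht1 : t ∈ Set.Ioo (0:ℝ) (min εu 1) := ⟨ht.1, lt_of_lt_of_le ht.2 (min_le_left _ _)⟩
    have ht2 : t ∈ Set.Ioo (0:ℝ) (min εv 1) := ⟨ht.1, lt_of_lt_of_le ht.2 (min_le_right _ _)⟩
    have h1 := hbu t ht1
    have h2 := hbv t ht2
    have ht01 : 0 < t := ht.1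
    have ht11 : t ≤ 1 := le_of_lt (lt_of_lt_of_le ht.2 hδ1)
    have hpos : 0 < Real.exp (u t) + 1 := by positivity
    rw [abs_of_pos (by positivity)]
    calc t * Real.exp (v t) * (Real.exp (u t) + 1)
        ≤ 1 * Real.exp Cv * (Real.exp Cu + 1) := by
          apply mul_le_mul
          · apply mul_le_mul ht11 h2 (Real.exp_pos _).le zero_le_one
          · linarith
          · positivity
          · positivity
    _ = Real.exp Cv * (Real.exp Cu + 1) := by ring
  · apply key_aux N₂ v (fun t => t * Real.exp (u t) * (Real.exp (v t) - 1)) hv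
      ((continuousOn_id.mul hceu).mul (hcev.sub continuousOn_const)) hODEv
      _ ⟨Cv, εv, hεv, hCv⟩ r hr
    refine ⟨Real.exp Cu * (Real.exp Cv + 1), δ, hδ, fun t ht => ?_⟩
    have ht1 : t ∈ Set.Ioo (0:ℝ) (min εu 1) := ⟨ht.1, lt_of_lt_of_le ht.2 (min_le_left _ _)⟩
    have ht2 : t ∈ Set.Ioo (0:ℝ) (min εv 1) := ⟨ht.1, lt_of_lt_of_le ht.2 (min_le_right _ _)⟩
    have h1 := hbu t ht1
    have h2 := hbv t ht2
    have ht01 : 0 < t := ht.1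
    have ht11 : t ≤ 1 := le_of_lt (lt_of_lt_of_le ht.2 hδ1)
    have habs : |Real.exp (v t) - 1| ≤ Real.exp Cv + 1 := by
      have := abs_sub_abs_le_abs_sub (Real.exp (v t)) 1
      rw [abs_le]
      constructor
      · have := (Real.exp_pos (v t)).le
        nlinarith
      · rw [abs_of_nonneg (Real.exp_pos (v t)).le] at *
        nlinarith
    calc |t * Real.exp (u t) * (Real.exp (v t) - 1)|
        = t * Real.exp (u t) * |Real.exp (v t) - 1| := by
          rw [abs_mul, abs_of_nonneg (by positivity : (0:ℝ) ≤ t * Real.exp (u t))]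
    _ ≤ 1 * Real.exp Cu * (Real.exp Cv + 1) := by
          apply mul_le_mul
          · apply mul_le_mul ht11 h1 (Real.exp_pos _).le zero_le_one
          · exact habs
          · positivity
          · positivity
    _ = Real.exp Cu * (Real.exp Cv + 1) := by ring
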